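/- arXiv:1702.00249 — 6 statements merged into one kernel-verified Lean document; each statement's English description precedes it below -/
import Mathlib

section
/- Let m, ℓ be positive integers and d an integer with 0 < d < 2^m. Then there are at least 2^{ℓ+m-1} integers j with 0 ≤ j < 2^{ℓ+m} such that |{dj}_{2^m}| ≤ 2^{m-2}, where {u}_n denotes the representative of u mod n in [-n/2, n/2). -/
/-- `smod u n` is `u` reduced modulo `n` constrained to `[-n/2, n/2)` (for even positive `n`). -/
def smod (u n : ℤ) : ℤ := (u + n / 2) % n - n / 2

lemma smod_lb (u n : ℤ) (hn : 0 < n) : -(n / 2) ≤ smod u n := by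
  have := Int.emod_nonneg (u + n / 2) (by omega : n ≠ 0)
  unfold smod; omega

lemma smod_ub (u n : ℤ) (hn : 0 < n) : smod u n < n - n / 2 := by
  have := Int.emod_lt_of_pos (u + n / 2) hn
  unfold smod; omega

lemma smod_sub_dvd (u n : ℤ) : n ∣ u - smod u n := by
  refine ⟨(u + n / 2) / n, ?_⟩
  have h := Int.emod_add_mul_ediv (u + n / 2) n
  unfold smod; linarith

lemma smod_congr (u v n : ℤ) (h : n ∣ u - v) : smod u n = smod v n := by
  unfold smod
  have h1 : v ≡ u [ZMOD n] := Int.modEq_iff_dvd.mpr h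
  have h2 : v + n / 2 ≡ u + n / 2 [ZMOD n] := h1.add_right _
  have := h2.symm
  unfold Int.ModEq at this
  omega

lemma flip_smod (m : ℕ) (hm : 1 ≤ m) (u : ℤ)
    (h : ¬ |smod u (2 ^ m)| ≤ 2 ^ (m - 2)) :
    |smod (u + 2 ^ (m - 1)) (2 ^ m)| ≤ 2 ^ (m - 2) := by
  rcases Nat.lt_or_ge m 2 with hm2 | hm2
  · -- m = 1 : premise is false
    interval_cases m
    exfalso
    apply h
    have h1 := smod_lb u 2 (by norm_num)
    have h2 := smod_ub u 2 (by norm_num)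
    simp only [pow_one] at *
    norm_num at *
    rw [abs_le]; omega
  · set Q : ℤ := 2 ^ (m - 2) with hQdef
    have hQ : 0 < Q := by positivity
    have e1 : (2 : ℤ) ^ (m - 1) = 2 * Q := by
      rw [hQdef, ← pow_succ']; congr 1; omega
    have e2 : (2 : ℤ) ^ m = 4 * Q := by
      rw [hQdef, show (4 : ℤ) = 2 ^ 2 by norm_num, ← pow_add]; congr 1; omega
    simp only [e1, e2] at h ⊢
    have hhalf : (4 * Q) / 2 = 2 * Q := by omega
    set x := smod u (4 * Q) with hx
    set y := smod (u + 2 * Q) (4 * Q) with hy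
    have hx1 := smod_lb u (4 * Q) (by linarith)
    have hx2 := smod_ub u (4 * Q) (by linarith)
    have hy1 := smod_lb (u + 2 * Q) (4 * Q) (by linarith)
    have hy2 := smod_ub (u + 2 * Q) (4 * Q) (by linarith)
    rw [hhalf] at hx1 hx2 hy1 hy2
    have hdx := smod_sub_dvd u (4 * Q)
    have hdy := smod_sub_dvd (u + 2 * Q) (4 * Q)
    have hd : (4 * Q) ∣ (y - x - 2 * Q) := by
      have : y - x - 2 * Q = (u - x) - ((u + 2 * Q) - y) := by ring
      rw [this]; exact dvd_sub hdx hdy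
    obtain ⟨k, hk⟩ := hd
    have habs : Q < x ∨ Q < -x := lt_abs.mp (not_le.mp h)
    have hk' : k = 0 ∨ k = -1 := by
      by_contra hcon
      have h1 : 1 ≤ k ∨ k ≤ -2 := by omega
      rcases h1 with h1 | h1
      · have : 4 * Q ≤ 4 * Q * k := le_mul_of_one_le_right (by linarith) h1
        linarith
      · have : 4 * Q * k ≤ 4 * Q * (-2) :=
          mul_le_mul_of_nonneg_left h1 (by linarith)
        linarith
    rw [abs_le]
    rcases hk' with rfl | rfl
    · simp at hk; omega
    · simp at hk; omega

lemma exists_t (m : ℕ) (hm : 1 ≤ m) (d : ℤ) (hd : 0 < d) (hd' : d < 2 ^ m) :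
    ∃ t : ℤ, (2 ^ m : ℤ) ∣ d * t - 2 ^ (m - 1) := by
  obtain ⟨a, e, he, hde⟩ := Nat.exists_eq_two_pow_mul_odd (show d.toNat ≠ 0 by omega)
  have hdeq : d = 2 ^ a * (e : ℤ) := by
    have h1 : (d.toNat : ℤ) = d := Int.toNat_of_nonneg hd.le
    rw [← h1, hde]; push_cast; ring
  have he1 : 1 ≤ e := by
    rcases he with ⟨r, hr⟩; omega
  have ham : a < m := by
    by_contra hcon
    push_neg at hcon
    have h1 : (2 : ℤ) ^ m ≤ 2 ^ a := pow_le_pow_right₀ (by norm_num) hcon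
    have h2 : (2 : ℤ) ^ a ≤ 2 ^ a * (e : ℤ) := by
      nlinarith [pow_pos (show (0:ℤ) < 2 by norm_num) a]
    rw [hdeq] at hd'; linarith
  -- e is odd, hence coprime with 2^m
  obtain ⟨r, hr⟩ := he
  have hcop : IsCoprime (e : ℤ) 2 := ⟨1, -(r : ℤ), by push_cast [hr]; ring⟩
  obtain ⟨s, v, hsv⟩ := hcop.pow_right (n := m)
  refine ⟨s * 2 ^ (m - 1 - a), -(v * 2 ^ (m - 1)), ?_⟩
  have hpow : (2 : ℤ) ^ a * 2 ^ (m - 1 - a) = 2 ^ (m - 1) := by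
    rw [← pow_add]; congr 1; omega
  rw [hdeq]
  linear_combination ((e : ℤ) * s) * hpow + (2 : ℤ) ^ (m - 1) * hsv

theorem count_good_j (m ℓ : ℕ) (hm : 1 ≤ m) (hl : 1 ≤ ℓ) (d : ℤ)
    (hd : 0 < d) (hd' : d < 2 ^ m) :
    2 ^ (ℓ + m - 1) ≤
      ((Finset.Ico (0 : ℤ) (2 ^ (ℓ + m))).filter
        (fun j => |smod (d * j) (2 ^ m)| ≤ 2 ^ (m - 2))).card := by
  classical
  obtain ⟨t, ht⟩ := exists_t m hm d hd hd'
  set N : ℤ := 2 ^ (ℓ + m) with hNdef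
  set M : ℤ := 2 ^ m with hMdef
  have hN : 0 < N := by positivity
  have hMN : M ∣ N := pow_dvd_pow 2 (by omega)
  set S := Finset.Ico (0 : ℤ) N with hSdef
  set P : ℤ → Prop := fun j => |smod (d * j) M| ≤ 2 ^ (m - 2) with hPdef
  have key : (S.filter fun j => ¬ P j).card ≤ (S.filter P).card := by
    apply Finset.card_le_card_of_injOn (fun j => (j + t) % N)
    · intro j hj
      simp only [hSdef, hPdef, Finset.mem_coe, Finset.mem_filter, Finset.mem_Ico] at hj ⊢
      refine ⟨⟨Int.emod_nonneg _ hN.ne', Int.emod_lt_of_pos _ hN⟩, ?_⟩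
      have hA : N ∣ (j + t) % N - (j + t) := by
        refine ⟨-((j + t) / N), ?_⟩
        have := Int.emod_add_mul_ediv (j + t) N
        linarith
      have h1 : smod (d * ((j + t) % N)) M = smod (d * j + 2 ^ (m - 1)) M := by
        apply smod_congr
        have heq : d * ((j + t) % N) - (d * j + 2 ^ (m - 1)) =
            d * ((j + t) % N - (j + t)) + (d * t - 2 ^ (m - 1)) := by ring
        rw [heq]
        exact dvd_add ((hMN.trans hA).mul_left d) ht
      rw [h1]
      exact flip_smod m hm (d * j) hj.2
    · intro j1 h1 j2 h2 heq
      simp only [hSdef, Finset.coe_filter, Set.mem_setOf_eq, Finset.mem_Ico] at h1 h2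
      have hmod : (j1 + t) ≡ (j2 + t) [ZMOD N] := heq
      have hdvd : N ∣ (j2 + t) - (j1 + t) := Int.modEq_iff_dvd.mp hmod
      have hdvd' : N ∣ j2 - j1 := by
        have : j2 - j1 = (j2 + t) - (j1 + t) := by ring
        rw [this]; exact hdvd
      have := Int.eq_zero_of_abs_lt_dvd hdvd' (by rw [abs_lt]; omega)
      omega
  have hsum := Finset.card_filter_add_card_filter_not (s := S) P
  have hfix : (Finset.filter (fun j => |smod (d * j) M| ≤ 2 ^ (m - 2)) S).card
      = (S.filter P).card := by
    congr 1
  have hcard : S.card = 2 ^ (ℓ + m) := by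
    rw [hSdef, Int.card_Ico, hNdef, sub_zero]
    rw [show ((2 : ℤ) ^ (ℓ + m)) = ((2 ^ (ℓ + m) : ℕ) : ℤ) by push_cast; ring]
    exact Int.toNat_natCast _
  have hpow2 : 2 ^ (ℓ + m) = 2 * 2 ^ (ℓ + m - 1) := by
    rw [← pow_succ']; congr 1; omega
  omega
end

section
/- Let m, ℓ, κ be nonnegative integers with κ ≤ m - 1. As j ranges over the integers 0 ≤ j < 2^{ℓ+m}, the map j ↦ (2^κ · u · j) mod 2^m, where u is odd and d = 2^κ u, takes each multiple of 2^κ in [0, 2^m) exactly 2^{ℓ+κ} times. -/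
theorem count_preimages_mul_mod (m ℓ κ : ℕ) (hm : 1 ≤ m) (hl : 1 ≤ ℓ) (hκ : κ ≤ m - 1)
    (u d : ℤ) (hu : Odd u) (hdu : d = 2 ^ κ * u) (hd : 0 < d) (hd' : d < 2 ^ m)
    (r : ℤ) (hr0 : 0 ≤ r) (hr1 : r < 2 ^ m) (hrdvd : (2 : ℤ) ^ κ ∣ r) :
    ((Finset.Ico (0 : ℤ) (2 ^ (ℓ + m))).filter
        (fun j => (d * j) % 2 ^ m = r)).card = 2 ^ (ℓ + κ) := by
  have hκm : κ ≤ m := le_trans hκ (Nat.sub_le m 1)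
  set n := m - κ with hn
  have hmn : m = κ + n := by omega
  obtain ⟨s, hs⟩ := hrdvd
  obtain ⟨w, hw⟩ := hu
  have hco : IsCoprime u ((2:ℤ) ^ n) := by
    refine IsCoprime.pow_right ⟨1, -w, ?_⟩
    rw [hw]; ring
  obtain ⟨a, b, hab⟩ := hco
  have hq : (0:ℤ) < 2 ^ n := by positivity
  have hqκ : (0:ℤ) < 2 ^ κ := by positivity
  have hrm : r % 2 ^ m = r := Int.emod_eq_of_lt hr0 hr1
  have key : ∀ j : ℤ, ((d * j) % 2 ^ m = r) ↔ j ≡ a * s [ZMOD (2:ℤ)^n] := by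
    intro j
    rw [Int.modEq_iff_dvd]
    have h1 : ((d * j) % 2 ^ m = r) ↔ ((d * j) % 2 ^ m = r % 2 ^ m) := by rw [hrm]
    rw [h1, show ((d * j) % 2 ^ m = r % 2 ^ m) = (d * j ≡ r [ZMOD 2 ^ m]) from rfl,
      Int.modEq_iff_dvd]
    have h2 : ((2:ℤ)^m ∣ r - d * j) ↔ ((2:ℤ)^n ∣ s - u * j) := by
      have e : r - d * j = 2 ^ κ * (s - u * j) := by rw [hdu, hs]; ring
      rw [e, hmn, pow_add]
      exact mul_dvd_mul_iff_left hqκ.ne'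
    rw [h2]
    constructor
    · rintro ⟨c, hc⟩
      exact ⟨a * c - j * b, by linear_combination a * hc + j * hab⟩
    · rintro ⟨c, hc⟩
      exact ⟨u * c + s * b, by linear_combination u * hc - s * hab⟩
  have hfe : ((Finset.Ico (0 : ℤ) (2 ^ (ℓ + m))).filter
        (fun j => (d * j) % 2 ^ m = r)) =
      ((Finset.Ico (0 : ℤ) (2 ^ (ℓ + m))).filter
        (fun j => j ≡ a * s [ZMOD (2:ℤ)^n])) := by
    apply Finset.filter_congr
    intro j _
    exact key j
  rw [hfe]
  have hcard := Int.Ico_filter_modEq_card (0:ℤ) (2 ^ (ℓ + m)) hq (a * s)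
  have e1 : ((((2:ℤ) ^ (ℓ + m) : ℤ) : ℚ) - ((a * s : ℤ) : ℚ)) / (((2:ℤ) ^ n : ℤ) : ℚ) =
      ((((0:ℤ)) : ℚ) - ((a * s : ℤ) : ℚ)) / (((2:ℤ) ^ n : ℤ) : ℚ) + (((2:ℤ) ^ (ℓ + κ) : ℤ) : ℚ) := by
    have hqQ : ((2:ℚ) ^ n) ≠ 0 := by positivity
    push_cast
    rw [show ℓ + m = n + (ℓ + κ) by omega, pow_add]
    field_simp
    ring
  rw [e1, Int.ceil_add_intCast, add_sub_cancel_left, max_eq_left (by positivity)] at hcard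
  exact_mod_cast hcard
end

section
/- Let T_e denote the number of pairs (a, b) with 0 ≤ a < 2^{ℓ+m}, 0 ≤ b < 2^ℓ and a - bd = e, where 0 < d < 2^m. Then Σ_{e=-2^{ℓ+m}}^{2^{ℓ+m}-1} T_e² ≥ 2^{3ℓ+m-1}. -/
theorem sum_Te_sq (m ℓ : ℕ) (hm : 1 ≤ m) (hl : 1 ≤ ℓ) (d : ℤ) (hd : 0 < d) (hd' : d < 2 ^ m)
    (T : ℤ → ℕ)
    (hT : ∀ e : ℤ, T e =
      ((Finset.Ico (0 : ℤ) (2 ^ (ℓ + m)) ×ˢ Finset.Ico (0 : ℤ) (2 ^ ℓ)).filter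
        (fun p => p.1 - p.2 * d = e)).card) :
    2 ^ (3 * ℓ + m - 1) ≤
      ∑ e ∈ Finset.Ico (-(2 ^ (ℓ + m)) : ℤ) (2 ^ (ℓ + m)), (T e) ^ 2 := by
  set S : Finset ℤ := Finset.Ico (-(2 ^ (ℓ + m)) : ℤ) (2 ^ (ℓ + m)) with hS
  set P : Finset (ℤ × ℤ) := Finset.Ico (0 : ℤ) (2 ^ (ℓ + m)) ×ˢ Finset.Ico (0 : ℤ) (2 ^ ℓ)
    with hP
  have hmem : ∀ p ∈ P, p.1 - p.2 * d ∈ S := by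
    rintro ⟨a, b⟩ hp
    simp only [hP, Finset.mem_product, Finset.mem_Ico] at hp
    obtain ⟨⟨ha0, ha1⟩, hb0, hb1⟩ := hp
    simp only [hS, Finset.mem_Ico]
    have hbd : b * d < 2 ^ (ℓ + m) := by
      rw [pow_add]
      exact mul_lt_mul' hb1.le hd' hd.le (by positivity)
    have hbd0 : 0 ≤ b * d := mul_nonneg hb0 hd.le
    constructor <;> linarith
  have h1 : ∑ e ∈ S, T e = P.card := by
    rw [Finset.card_eq_sum_card_fiberwise hmem]
    exact Finset.sum_congr rfl fun e _ => (hT e)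
  have h2 : P.card = 2 ^ (2 * ℓ + m) := by
    simp only [hP, Finset.card_product, Int.card_Ico]
    rw [show ((2:ℤ) ^ (ℓ + m) - 0) = 2 ^ (ℓ + m) by ring,
      show ((2:ℤ) ^ ℓ - 0) = 2 ^ ℓ by ring]
    rw [show ((2:ℤ) ^ (ℓ+m)) = ((2 ^ (ℓ+m) : ℕ) : ℤ) by push_cast; ring,
      show ((2:ℤ) ^ ℓ) = ((2 ^ ℓ : ℕ) : ℤ) by push_cast; ring,
      Int.toNat_natCast, Int.toNat_natCast, ← pow_add]
    ring_nf
  have h3 : S.card = 2 ^ (ℓ + m + 1) := by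
    simp only [hS, Int.card_Ico, sub_neg_eq_add]
    rw [show ((2:ℤ) ^ (ℓ+m) + 2 ^ (ℓ+m)) = ((2 ^ (ℓ+m+1) : ℕ) : ℤ) by push_cast; ring,
      Int.toNat_natCast]
  have cs : (∑ e ∈ S, (T e : ℤ)) ^ 2 ≤ S.card * ∑ e ∈ S, (T e : ℤ) ^ 2 :=
    sq_sum_le_card_mul_sum_sq
  have hsum : (∑ e ∈ S, (T e : ℤ)) = ((2 ^ (2 * ℓ + m) : ℕ) : ℤ) := by
    rw [← Nat.cast_sum, h1, h2]
  rw [hsum, h3] at cs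
  have cs' : (2 ^ (4 * ℓ + 2 * m) : ℕ) ≤ 2 ^ (ℓ + m + 1) * ∑ e ∈ S, (T e) ^ 2 := by
    have := cs
    push_cast at this
    have h4 : (2:ℤ) ^ (4 * ℓ + 2 * m) ≤ 2 ^ (ℓ + m + 1) * ∑ e ∈ S, (T e : ℤ) ^ 2 := by
      calc (2:ℤ) ^ (4 * ℓ + 2 * m) = ((2:ℤ) ^ (2 * ℓ + m)) ^ 2 := by
            rw [← pow_mul]; ring_nf
        _ ≤ _ := this
    exact_mod_cast h4
  have hexp : 2 ^ (ℓ + m + 1) * 2 ^ (3 * ℓ + m - 1) = 2 ^ (4 * ℓ + 2 * m) := by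
    rw [← pow_add]
    congr 1
    omega
  refine Nat.le_of_mul_le_mul_left ?_ (show 0 < 2 ^ (ℓ + m + 1) by positivity)
  rw [hexp]
  exact cs'
end

section
/- Let (j_i, k_i), i = 1,...,s, be good pairs for d (i.e. |{d j_i + 2^m k_i}_{2^{ℓ+m}}| ≤ 2^{m-2}), with 0 < d < 2^m, and let v = ({-2^m k_1}_{2^{ℓ+m}}, ..., {-2^m k_s}_{2^{ℓ+m}}, 0) ∈ ℤ^{s+1}. Then there exist integers m_1, ..., m_s such that the lattice vector u = ({d j_1}_{2^{ℓ+m}} + m_1 2^{ℓ+m}, ..., {d j_s}_{2^{ℓ+m}} + m_s 2^{ℓ+m}, d) satisfies |u - v| < √(s/4 + 1) · 2^m. -/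
lemma smod_dvd_sub (u n : ℤ) : n ∣ smod u n - u := by
  have h := Int.emod_def (u + n / 2) n
  have : smod u n - u = -(n * ((u + n / 2) / n)) := by
    unfold smod; rw [h]; ring
  rw [this]
  exact dvd_neg.mpr (Dvd.intro _ rfl)

theorem close_lattice_vector_exists (s ℓ m : ℕ) (hs : 1 ≤ s) (hl : 1 ≤ ℓ) (hm : 1 ≤ m)
    (d : ℤ) (hd : 0 < d) (hd' : d < 2 ^ m) (j k : Fin s → ℤ)
    (hjk : ∀ i, 0 ≤ j i ∧ j i < 2 ^ (ℓ + m) ∧ 0 ≤ k i ∧ k i < 2 ^ ℓ ∧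
      |smod (d * j i + 2 ^ m * k i) (2 ^ (ℓ + m))| ≤ 2 ^ (m - 2)) :
    ∃ c : Fin s → ℤ,
      Real.sqrt (∑ i : Fin (s + 1),
          (((Fin.snoc (fun i => smod (d * j i) (2 ^ (ℓ + m)) + c i * 2 ^ (ℓ + m)) d :
                Fin (s + 1) → ℤ) i -
            (Fin.snoc (fun i => smod (-(2 ^ m * k i)) (2 ^ (ℓ + m))) 0 :
                Fin (s + 1) → ℤ) i : ℤ) : ℝ) ^ 2) <
        Real.sqrt ((s : ℝ) / 4 + 1) * 2 ^ m := by
  set n : ℤ := 2 ^ (ℓ + m) with hn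
  have hnpos : (0 : ℤ) < n := by positivity
  set c : Fin s → ℤ := fun i =>
    (smod (d * j i + 2 ^ m * k i) n + smod (-(2 ^ m * k i)) n - smod (d * j i) n) / n with hc
  have hdvd : ∀ i, n ∣ smod (d * j i + 2 ^ m * k i) n + smod (-(2 ^ m * k i)) n
      - smod (d * j i) n := by
    intro i
    have h1 := smod_dvd_sub (d * j i + 2 ^ m * k i) n
    have h2 := smod_dvd_sub (-(2 ^ m * k i)) n
    have h3 := smod_dvd_sub (d * j i) n
    have := dvd_sub (dvd_add h1 h2) h3
    have heq : (smod (d * j i + 2 ^ m * k i) n - (d * j i + 2 ^ m * k i))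
        + (smod (-(2 ^ m * k i)) n - -(2 ^ m * k i))
        - (smod (d * j i) n - d * j i)
        = smod (d * j i + 2 ^ m * k i) n + smod (-(2 ^ m * k i)) n - smod (d * j i) n := by
      ring
    rwa [heq] at this
  have hkey : ∀ i, smod (d * j i) n + c i * n - smod (-(2 ^ m * k i)) n
      = smod (d * j i + 2 ^ m * k i) n := by
    intro i
    show smod (d * j i) n + (smod (d * j i + 2 ^ m * k i) n + smod (-(2 ^ m * k i)) n
      - smod (d * j i) n) / n * n - smod (-(2 ^ m * k i)) n = _
    rw [Int.ediv_mul_cancel (hdvd i)]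
    ring
  refine ⟨c, ?_⟩
  have hsum : (∑ i : Fin (s + 1),
          (((Fin.snoc (fun i => smod (d * j i) n + c i * n) d : Fin (s + 1) → ℤ) i -
            (Fin.snoc (fun i => smod (-(2 ^ m * k i)) n) 0 : Fin (s + 1) → ℤ) i : ℤ) : ℝ) ^ 2)
      = (∑ i : Fin s, ((smod (d * j i + 2 ^ m * k i) n : ℤ) : ℝ) ^ 2) + ((d : ℝ)) ^ 2 := by
    rw [Fin.sum_univ_castSucc]
    congr 1
    · apply Finset.sum_congr rfl
      intro i _
      simp only [Fin.snoc_castSucc]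
      rw [← hkey i]
    · simp
  rw [hsum]
  have hbound : (∑ i : Fin s, ((smod (d * j i + 2 ^ m * k i) n : ℤ) : ℝ) ^ 2) + ((d : ℝ)) ^ 2
      < ((s : ℝ) / 4 + 1) * (2 ^ m) ^ 2 := by
    have hterm : ∀ i : Fin s, ((smod (d * j i + 2 ^ m * k i) n : ℤ) : ℝ) ^ 2
        ≤ ((2 : ℝ) ^ m) ^ 2 / 4 := by
      intro i
      have h := (hjk i).2.2.2.2
      have h2 : |smod (d * j i + 2 ^ m * k i) n| ≤ 2 ^ (m - 1) := by
        refine h.trans ?_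
        exact pow_le_pow_right₀ (by norm_num) (by omega)
      have h3 : (|(smod (d * j i + 2 ^ m * k i) n : ℝ)|) ≤ (2 : ℝ) ^ (m - 1) := by
        rw [← Int.cast_abs]
        exact_mod_cast h2
      have h4 : ((smod (d * j i + 2 ^ m * k i) n : ℤ) : ℝ) ^ 2 ≤ ((2 : ℝ) ^ (m - 1)) ^ 2 := by
        rw [← sq_abs]
        exact pow_le_pow_left₀ (abs_nonneg _) h3 2
      refine h4.trans ?_
      have : ((2 : ℝ) ^ (m - 1)) ^ 2 * 4 ≤ ((2 : ℝ) ^ m) ^ 2 := by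
        rw [← pow_mul, ← pow_mul]
        have : (2 : ℝ) ^ ((m - 1) * 2) * 4 = 2 ^ ((m - 1) * 2 + 2) := by
          rw [pow_add]; norm_num
        rw [this]
        exact pow_le_pow_right₀ (by norm_num) (by omega)
      linarith
    have hsum2 : (∑ i : Fin s, ((smod (d * j i + 2 ^ m * k i) n : ℤ) : ℝ) ^ 2)
        ≤ (s : ℝ) * (((2 : ℝ) ^ m) ^ 2 / 4) := by
      calc (∑ i : Fin s, ((smod (d * j i + 2 ^ m * k i) n : ℤ) : ℝ) ^ 2)
          ≤ ∑ _i : Fin s, ((2 : ℝ) ^ m) ^ 2 / 4 := Finset.sum_le_sum (fun i _ => hterm i)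
        _ = (s : ℝ) * (((2 : ℝ) ^ m) ^ 2 / 4) := by simp [mul_comm]
    have hd2 : ((d : ℝ)) ^ 2 < ((2 : ℝ) ^ m) ^ 2 := by
      have h0 : (0 : ℝ) < (d : ℝ) := by exact_mod_cast hd
      have h1 : (d : ℝ) < 2 ^ m := by exact_mod_cast hd'
      exact pow_lt_pow_left₀ h1 (le_of_lt h0) (by norm_num)
    have : (s : ℝ) * (((2 : ℝ) ^ m) ^ 2 / 4) = (s : ℝ) / 4 * ((2 : ℝ) ^ m) ^ 2 := by ring
    nlinarith
  have hrhs : Real.sqrt ((s : ℝ) / 4 + 1) * 2 ^ m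
      = Real.sqrt (((s : ℝ) / 4 + 1) * (2 ^ m) ^ 2) := by
    rw [Real.sqrt_mul (by positivity), Real.sqrt_sq (by positivity)]
  rw [hrhs]
  exact Real.sqrt_lt_sqrt (by positivity) hbound
end

section
/- Fix m, ℓ, s ≥ 1 and 0 < d < 2^m and choose the tuple (j_1,...,j_s) uniformly at random from the set of tuples where each j_i is good (there are at least 2^{ℓ+m-1} good j's for each coordinate). Then the probability that the lattice L generated by (j_1,...,j_s,1) and 2^{ℓ+m} e_i contains a nonzero vector u = (u_1,...,u_{s+1}) with |u_i| < 2^{m-3} for all i is at most 2^{-s-1}. -/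
lemma int_eq_zero_of_dvd_of_abs_lt {g x : ℤ} (h : g ∣ x) (h2 : |x| < g) : x = 0 := by
  rcases h with ⟨t, rfl⟩
  rcases eq_or_ne t 0 with rfl | ht
  · ring
  · exfalso
    have hg : 0 < g := lt_of_le_of_lt (abs_nonneg _) h2
    have h3 : g * 1 ≤ g * |t| := by
      apply mul_le_mul_of_nonneg_left (Int.one_le_abs ht) hg.le
    rw [abs_mul, abs_of_pos hg] at h2
    linarith

lemma smod_eq_of_dvd {a b n : ℤ} (h : n ∣ a - b) : smod a n = smod b n := by
  unfold smod
  have : (a + n/2) % n = (b + n/2) % n := by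
    have h1 : a ≡ b [ZMOD n] := Int.modEq_iff_dvd.mpr (dvd_sub_comm.mp h)
    exact h1.add_right _
  omega

lemma smod_dichotomy (m : ℕ) (hm : 1 ≤ m) (r : ℤ) :
    |smod r (2^m)| ≤ 2^(m-2) ∨ |smod (r + 2^(m-1)) (2^m)| ≤ 2^(m-2) := by
  set n : ℤ := 2^m with hn
  set h : ℤ := 2^(m-1) with hh
  set q : ℤ := 2^(m-2) with hq
  have hn2 : n = 2 * h := by
    show (2:ℤ)^m = 2 * 2^(m-1)
    rw [← pow_succ']
    congr 1
    omega
  have hq1 : (1:ℤ) ≤ q := one_le_pow₀ (by norm_num)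
  have hh1 : (1:ℤ) ≤ h := one_le_pow₀ (by norm_num)
  have hh2q : h ≤ 2 * q := by
    rcases Nat.lt_or_ge m 2 with hm2 | hm2
    · interval_cases m <;> simp_all
    · have : h = 2 * q := by
        show (2:ℤ)^(m-1) = 2 * 2^(m-2)
        rw [← pow_succ']
        congr 1
        omega
      omega
  have hndvd : n / 2 = h := by omega
  have hsm1 : smod r n = (r + h) % n - h := by unfold smod; rw [hndvd]
  have hsm2 : smod (r + h) n = r % n - h := by
    unfold smod
    rw [hndvd]
    have h2 : r + h + h = r + n * 1 := by omega
    rw [h2, Int.add_mul_emod_self_left]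
  have hnpos : 0 < n := by positivity
  have hx := Int.emod_nonneg r hnpos.ne'
  have hx' := Int.emod_lt_of_pos r hnpos
  have hy := Int.emod_nonneg (r + h) hnpos.ne'
  have hy' := Int.emod_lt_of_pos (r + h) hnpos
  have hrel : (r + h) % n = r % n + h ∨ (r + h) % n = r % n + h - n := by
    have h1 : (r + h) % n = (r % n + h) % n := by
      conv_lhs => rw [← Int.mul_ediv_add_emod r n]
      rw [show n * (r/n) + r % n + h = r % n + h + n * (r/n) by ring,
        Int.add_mul_emod_self_left]
    rcases lt_or_ge (r % n + h) n with h2 | h2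
    · left; rw [h1, Int.emod_eq_of_lt (by omega) h2]
    · right
      rw [h1]
      have h3 : (r % n + h) % n = (r % n + h - n) % n := by
        conv_rhs => rw [show r % n + h - n = r % n + h + n * (-1) by ring,
          Int.add_mul_emod_self_left]
      rw [h3, Int.emod_eq_of_lt (by omega) (by omega)]
  rcases hrel with h1 | h1 <;>
    rw [hsm1, hsm2, h1, abs_le, abs_le] <;>
    · clear hsm1 hsm2 hndvd
      omega

lemma good_card (ℓ m : ℕ) (hl : 1 ≤ ℓ) (hm : 1 ≤ m) (d : ℤ) (hd : 0 < d) (hd' : d < 2^m) :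
    2^(ℓ+m-1) ≤ ((Finset.Ico (0:ℤ) (2^(ℓ+m))).filter
      (fun j => |smod (d * j) (2^m)| ≤ 2^(m-2))).card := by
  -- find k with d * k ≡ 2^(m-1) mod 2^m
  obtain ⟨k, hk⟩ : ∃ k : ℤ, (2^m : ℤ) ∣ d * k - 2^(m-1) := by
    set g : ℕ := Int.gcd d (2^m) with hg
    have hgd : (g:ℤ) ∣ d := Int.gcd_dvd_left _ _
    have hgn : (g:ℤ) ∣ 2^m := Int.gcd_dvd_right _ _
    have hgnn : g ∣ 2^m := by
      have : ((g:ℤ)) ∣ ((2^m : ℕ) : ℤ) := by push_cast; exact hgn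
      exact_mod_cast this
    obtain ⟨t, htm, hgt⟩ := (Nat.dvd_prime_pow Nat.prime_two).mp hgnn
    have htm' : t ≤ m - 1 := by
      rcases Nat.lt_or_ge t m with h | h
      · omega
      · exfalso
        have : t = m := by omega
        subst this
        rw [hgt] at hgd
        have : (2:ℤ)^t ≤ d := Int.le_of_dvd hd (by exact_mod_cast hgd)
        push_cast at this
        omega
    have hg1 : (g:ℤ) ∣ 2^(m-1) := by
      have : g ∣ 2^(m-1) := by
        rw [hgt]
        exact pow_dvd_pow 2 htm'
      have h2 : ((g:ℤ)) ∣ ((2^(m-1) : ℕ) : ℤ) := by exact_mod_cast this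
      push_cast at h2
      exact h2
    obtain ⟨c, hc⟩ := hg1
    have hbez := Int.gcd_eq_gcd_ab d (2^m)
    refine ⟨c * Int.gcdA d (2^m), ⟨-(c * Int.gcdB d (2^m)), ?_⟩⟩
    linear_combination (-c) * hbez - hc
  set N : ℤ := 2^(ℓ+m) with hN
  have hNpos : (0:ℤ) < N := by positivity
  have h2mN : (2^m : ℤ) ∣ N := by
    refine ⟨2^ℓ, ?_⟩
    rw [hN, ← pow_add]
    congr 1
    omega
  set G := (Finset.Ico (0:ℤ) N).filter (fun j => |smod (d * j) (2^m)| ≤ 2^(m-2)) with hG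
  set T2 := (Finset.Ico (0:ℤ) N).filter
    (fun j => |smod (d * ((j + k) % N)) (2^m)| ≤ 2^(m-2)) with hT2
  have hsub : Finset.Ico (0:ℤ) N ⊆ G ∪ T2 := by
    intro j hj
    rcases smod_dichotomy m hm (d * j) with h1 | h1
    · exact Finset.mem_union_left _ (Finset.mem_filter.mpr ⟨hj, h1⟩)
    · refine Finset.mem_union_right _ (Finset.mem_filter.mpr ⟨hj, ?_⟩)
      have heq : smod (d * ((j + k) % N)) (2^m) = smod (d * j + 2^(m-1)) (2^m) := by
        apply smod_eq_of_dvd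
        have hd1 : (2^m : ℤ) ∣ d * ((j + k) % N) - d * (j + k) := by
          apply dvd_trans h2mN
          refine ⟨-(d * ((j+k)/N)), ?_⟩
          have hh := Int.mul_ediv_add_emod (j + k) N
          linear_combination d * hh
        have : d * ((j + k) % N) - (d * j + 2^(m-1))
            = (d * ((j + k) % N) - d * (j + k)) + (d * k - 2^(m-1)) := by ring
        rw [this]
        exact dvd_add hd1 hk
      rw [heq]
      exact h1
  have hT2G : T2.card ≤ G.card := by
    apply Finset.card_le_card_of_injOn (fun j => (j + k) % N)
    · intro j hj
      rw [hT2, Finset.mem_coe, Finset.mem_filter] at hj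
      rw [hG, Finset.mem_coe, Finset.mem_filter]
      refine ⟨Finset.mem_Ico.mpr ⟨Int.emod_nonneg _ hNpos.ne', Int.emod_lt_of_pos _ hNpos⟩, hj.2⟩
    · intro j1 hj1 j2 hj2 heq
      simp only [hT2, Finset.coe_filter, Set.mem_setOf_eq, Finset.mem_Ico] at hj1 hj2
      have hmod : j1 ≡ j2 [ZMOD N] := by
        have h1 : j1 + k ≡ j2 + k [ZMOD N] := heq
        exact h1.sub_right k |>.trans (by simp) |>.symm |>.trans (by simp) |>.symm
      have hdvd : N ∣ j2 - j1 := Int.ModEq.dvd hmod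
      have := int_eq_zero_of_dvd_of_abs_lt hdvd (by
        rw [abs_lt]
        constructor <;> omega)
      omega
  have hcard : (Finset.Ico (0:ℤ) N).card = 2^(ℓ+m) := by
    rw [Int.card_Ico]
    rw [hN, show ((2:ℤ)^(ℓ+m) - 0) = ((2^(ℓ+m) : ℕ) : ℤ) by push_cast; ring]
    exact Int.toNat_natCast _
  have h1 : (Finset.Ico (0:ℤ) N).card ≤ G.card + T2.card :=
    le_trans (Finset.card_le_card hsub) (Finset.card_union_le _ _)
  have h2 : (2:ℕ)^(ℓ+m) = 2 * 2^(ℓ+m-1) := by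
    rw [← pow_succ']
    congr 1
    omega
  omega

lemma span_dvd {s : ℕ} {N : ℤ} {j : Fin s → ℤ} {u : Fin (s+1) → ℤ}
    (hu : u ∈ Submodule.span ℤ (Set.range
      (Fin.cons (Fin.snoc j 1) (fun i : Fin s => Pi.single i.castSucc N) :
        Fin (s+1) → Fin (s+1) → ℤ))) :
    ∀ i : Fin s, N ∣ u i.castSucc - u (Fin.last s) * j i := by
  induction hu using Submodule.span_induction with
  | mem x hx =>
    obtain ⟨i0, rfl⟩ := hx
    intro i
    rcases Fin.eq_zero_or_eq_succ i0 with rfl | ⟨i', rfl⟩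
    · simp only [Fin.cons_zero, Fin.snoc_castSucc, Fin.snoc_last]
      simp
    · simp only [Fin.cons_succ]
      have hlast : (Pi.single i'.castSucc N : Fin (s+1) → ℤ) (Fin.last s) = 0 := by
        apply Pi.single_eq_of_ne
        exact (Fin.castSucc_lt_last i').ne'
      rw [hlast]
      rcases eq_or_ne i i' with rfl | hne
      · simp
      · rw [Pi.single_eq_of_ne (by simpa using (Fin.castSucc_injective s).ne hne)]
        simp
  | zero => intro i; simp
  | add x y hx hy ihx ihy =>
    intro i
    have h2 : (x + y) i.castSucc - (x + y) (Fin.last s) * j i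
        = (x i.castSucc - x (Fin.last s) * j i) + (y i.castSucc - y (Fin.last s) * j i) := by
      simp only [Pi.add_apply]; ring
    rw [h2]
    exact dvd_add (ihx i) (ihy i)
  | smul a x hx ihx =>
    intro i
    have h2 : (a • x) i.castSucc - (a • x) (Fin.last s) * j i
        = a * (x i.castSucc - x (Fin.last s) * j i) := by
      simp [Pi.smul_apply, smul_eq_mul]; ring
    rw [h2]
    exact Dvd.dvd.mul_left (ihx i) a

lemma nat_dvd_pow2 {g K k : ℕ} (h1 : g ∣ 2^K) (h2 : g ≤ 2^k) : g ∣ 2^k := by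
  obtain ⟨t, ht, rfl⟩ := (Nat.dvd_prime_pow Nat.prime_two).mp h1
  exact pow_dvd_pow 2 ((Nat.pow_le_pow_iff_right (by norm_num)).mp h2)

lemma coord_card {M g : ℤ} (hg : 0 < g) (hgM : g ∣ M) (hM : 0 < M) :
    (((Finset.Ioo (-M) M).filter (fun u => g ∣ u)) ×ˢ Finset.Ico (0:ℤ) g).card
      ≤ (Finset.Ico (-M) M).card := by
  apply Finset.card_le_card_of_injOn (fun p => p.1 + p.2)
  · intro p hp
    rw [Finset.mem_coe, Finset.mem_product, Finset.mem_filter, Finset.mem_Ioo, Finset.mem_Ico] at hp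
    obtain ⟨⟨⟨hu1, hu2⟩, hdu⟩, hr1, hr2⟩ := hp
    have hle : p.1 ≤ M - g := by
      have hdvd : g ∣ M - p.1 := dvd_sub hgM hdu
      have hpos : 0 < M - p.1 := by omega
      have := Int.le_of_dvd hpos hdvd
      omega
    rw [Finset.mem_coe, Finset.mem_Ico]
    constructor <;> simp only <;> omega
  · intro p hp q hq heq
    rw [Finset.mem_coe, Finset.mem_product, Finset.mem_filter, Finset.mem_Ioo,
      Finset.mem_Ico] at hp hq
    simp only at heq
    have hdvd : g ∣ q.2 - p.2 := by
      have : q.2 - p.2 = p.1 - q.1 := by omega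
      rw [this]
      exact dvd_sub hp.1.2 hq.1.2
    have h0 : q.2 - p.2 = 0 := int_eq_zero_of_dvd_of_abs_lt hdvd (by
      rw [abs_lt]; constructor <;> omega)
    have h1 : p.2 = q.2 := by omega
    have h2 : p.1 = q.1 := by omega
    exact Prod.ext h2 h1

open Classical in
noncomputable def wit (s ℓ m : ℕ) (j : Fin s → ℤ) : Fin (s+1) → ℤ :=
  if h : ∃ u : Fin (s+1) → ℤ, u ≠ 0 ∧
      u ∈ Submodule.span ℤ (Set.range
        (Fin.cons (Fin.snoc j 1)
          (fun i : Fin s => Pi.single i.castSucc ((2 : ℤ) ^ (ℓ + m))) :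
            Fin (s + 1) → Fin (s + 1) → ℤ)) ∧
      ∀ i, |u i| < 2 ^ (m - 3)
  then h.choose else 0

lemma wit_spec (s ℓ m : ℕ) (j : Fin s → ℤ)
    (h : ∃ u : Fin (s+1) → ℤ, u ≠ 0 ∧
      u ∈ Submodule.span ℤ (Set.range
        (Fin.cons (Fin.snoc j 1)
          (fun i : Fin s => Pi.single i.castSucc ((2 : ℤ) ^ (ℓ + m))) :
            Fin (s + 1) → Fin (s + 1) → ℤ)) ∧
      ∀ i, |u i| < 2 ^ (m - 3)) :
    wit s ℓ m j ≠ 0 ∧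
      wit s ℓ m j ∈ Submodule.span ℤ (Set.range
        (Fin.cons (Fin.snoc j 1)
          (fun i : Fin s => Pi.single i.castSucc ((2 : ℤ) ^ (ℓ + m))) :
            Fin (s + 1) → Fin (s + 1) → ℤ)) ∧
      ∀ i, |wit s ℓ m j i| < 2 ^ (m - 3) := by
  rw [wit]
  rw [dif_pos h]
  exact h.choose_spec

lemma toNat_twoM (m : ℕ) (hm : 4 ≤ m) :
    ((2:ℤ)^(m-3) - -(2:ℤ)^(m-3)).toNat = 2^(m-2) := by
  have h : (2:ℤ)^(m-3) - -(2:ℤ)^(m-3) = ((2^(m-2) : ℕ) : ℤ) := by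
    push_cast
    rw [show m-2 = (m-3)+1 by omega, pow_succ]
    ring
  rw [h, Int.toNat_natCast]

lemma toNat_twoM' (m : ℕ) (hm : 4 ≤ m) :
    ((2:ℤ)^(m-3) - -(2:ℤ)^(m-3) - 1).toNat = 2^(m-2) - 1 := by
  have h : (2:ℤ)^(m-3) - -(2:ℤ)^(m-3) - 1 = ((2^(m-2) - 1 : ℕ) : ℤ) := by
    push_cast [show (1:ℕ) ≤ 2^(m-2) from Nat.one_le_two_pow]
    rw [show m-2 = (m-3)+1 by omega, pow_succ]
    ring
  rw [h, Int.toNat_natCast]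

open scoped Classical in
lemma bad_card (s ℓ m : ℕ) (hm : 4 ≤ m) (hl : 1 ≤ ℓ) (G : Finset ℤ)
    (hG : G ⊆ Finset.Ico (0:ℤ) (2^(ℓ+m))) :
    ((Fintype.piFinset (fun _ : Fin s => G)).filter
      (fun j : Fin s → ℤ => ∃ u : Fin (s + 1) → ℤ, u ≠ 0 ∧
        u ∈ Submodule.span ℤ (Set.range
          (Fin.cons (Fin.snoc j 1)
            (fun i : Fin s => Pi.single i.castSucc ((2 : ℤ) ^ (ℓ + m))) :
              Fin (s + 1) → Fin (s + 1) → ℤ)) ∧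
        ∀ i, |u i| < 2 ^ (m - 3))).card ≤ 2^((m-2)*(s+1)) := by
  have hMN : (2:ℤ)^(m-3) ≤ 2^(ℓ+m) := by
    apply pow_le_pow_right₀ (by norm_num)
    omega
  have hNpos : (0:ℤ) < 2^(ℓ+m) := by positivity
  have hMpos : (0:ℤ) < 2^(m-3) := by positivity
  -- facts about gcd for nonzero small a
  have gfacts : ∀ a : ℤ, a ≠ 0 → |a| < 2^(m-3) →
      0 < Int.gcd a ((2:ℤ)^(ℓ+m)) ∧ ((Int.gcd a ((2:ℤ)^(ℓ+m)) : ℤ)) ∣ (2:ℤ)^(m-3) := by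
    intro a ha haM
    have hgpos : 0 < Int.gcd a ((2:ℤ)^(ℓ+m)) := Int.gcd_pos_iff.mpr (Or.inl ha)
    set g : ℕ := Int.gcd a ((2:ℤ)^(ℓ+m)) with hgdef
    have hga : (g:ℤ) ∣ a := Int.gcd_dvd_left _ _
    have hgabs : (g:ℤ) ∣ |a| := (dvd_abs _ _).mpr hga
    have hgle : (g:ℤ) ≤ |a| := Int.le_of_dvd (abs_pos.mpr ha) hgabs
    have hglt : g < 2^(m-3) := by
      have h1 : (g:ℤ) < ((2^(m-3) : ℕ) : ℤ) := by push_cast; omega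
      exact_mod_cast h1
    have hgN : g ∣ 2^(ℓ+m) := by
      have h1 : (g:ℤ) ∣ ((2^(ℓ+m) : ℕ) : ℤ) := by push_cast; exact Int.gcd_dvd_right _ _
      exact_mod_cast h1
    have hgM : g ∣ 2^(m-3) := nat_dvd_pow2 hgN hglt.le
    refine ⟨hgpos, ?_⟩
    have : (g:ℤ) ∣ ((2^(m-3) : ℕ) : ℤ) := by exact_mod_cast hgM
    push_cast at this
    exact this
  -- the target finset
  set T := ((Finset.Ioo (-(2:ℤ)^(m-3)) (2^(m-3))).erase 0).sigma
    (fun a => Fintype.piFinset (fun _ : Fin s =>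
      ((Finset.Ioo (-(2:ℤ)^(m-3)) (2^(m-3))).filter
        (fun u => ((Int.gcd a ((2:ℤ)^(ℓ+m)) : ℤ)) ∣ u)) ×ˢ
      Finset.Ico (0:ℤ) (Int.gcd a ((2:ℤ)^(ℓ+m))))) with hT
  have hstep : ((Fintype.piFinset (fun _ : Fin s => G)).filter
      (fun j : Fin s → ℤ => ∃ u : Fin (s + 1) → ℤ, u ≠ 0 ∧
        u ∈ Submodule.span ℤ (Set.range
          (Fin.cons (Fin.snoc j 1)
            (fun i : Fin s => Pi.single i.castSucc ((2 : ℤ) ^ (ℓ + m))) :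
              Fin (s + 1) → Fin (s + 1) → ℤ)) ∧
        ∀ i, |u i| < 2 ^ (m - 3))).card ≤ T.card := by
    apply Finset.card_le_card_of_injOn (fun j =>
      (⟨wit s ℓ m j (Fin.last s), fun i => (wit s ℓ m j i.castSucc,
        j i / ((2:ℤ)^(ℓ+m) / (Int.gcd (wit s ℓ m j (Fin.last s)) ((2:ℤ)^(ℓ+m)))))⟩ :
        Σ _a : ℤ, Fin s → ℤ × ℤ))
    -- mapsTo
    · intro j hj
      rw [Finset.mem_coe, Finset.mem_filter] at hj
      obtain ⟨hjmem, hex⟩ := hj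
      obtain ⟨hw0, hwspan, hwlt⟩ := wit_spec s ℓ m j hex
      set u := wit s ℓ m j with hu
      set a := u (Fin.last s) with haa
      have hdvds := span_dvd hwspan
      have hjrange : ∀ i : Fin s, 0 ≤ j i ∧ j i < 2^(ℓ+m) := by
        intro i
        have := hG (Fintype.mem_piFinset.mp hjmem i)
        rw [Finset.mem_Ico] at this
        exact this
      have ha0 : a ≠ 0 := by
        intro ha
        apply hw0
        funext i
        refine Fin.lastCases ?_ ?_ i
        · exact ha
        · intro i'
          have h1 : (2:ℤ)^(ℓ+m) ∣ u i'.castSucc := by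
            have := hdvds i'
            rw [← haa] at this
            rw [ha] at this
            simpa using this
          have := int_eq_zero_of_dvd_of_abs_lt h1 (lt_of_lt_of_le (hwlt i'.castSucc) hMN)
          simpa using this
      have haM : |a| < 2^(m-3) := hwlt (Fin.last s)
      obtain ⟨hgpos, hgM⟩ := gfacts a ha0 haM
      set g : ℕ := Int.gcd a ((2:ℤ)^(ℓ+m)) with hgdef
      have hgN : ((g:ℤ)) ∣ (2:ℤ)^(ℓ+m) := Int.gcd_dvd_right _ _
      have hN1 : (g:ℤ) * ((2:ℤ)^(ℓ+m) / (g:ℤ)) = (2:ℤ)^(ℓ+m) := Int.mul_ediv_cancel' hgN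
      have hN1pos : 0 < (2:ℤ)^(ℓ+m) / (g:ℤ) := by
        rcases lt_trichotomy ((2:ℤ)^(ℓ+m) / (g:ℤ)) 0 with h | h | h
        · exfalso; nlinarith [hN1, hNpos, hgpos]
        · exfalso; rw [h] at hN1; simp at hN1; omega
        · exact h
      rw [hT]
      rw [Finset.mem_coe, Finset.mem_sigma]
      dsimp only
      constructor
      · rw [Finset.mem_erase, Finset.mem_Ioo]
        rw [abs_lt] at haM
        exact ⟨ha0, haM.1, haM.2⟩
      · rw [Fintype.mem_piFinset]
        intro i
        rw [Finset.mem_product]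
        dsimp only
        constructor
        · rw [Finset.mem_filter, Finset.mem_Ioo]
          have h1 := hwlt i.castSucc
          rw [abs_lt] at h1
          refine ⟨⟨h1.1, h1.2⟩, ?_⟩
          -- g ∣ u i.castSucc
          obtain ⟨c, hc⟩ := hdvds i
          have hga : (g:ℤ) ∣ a := Int.gcd_dvd_left _ _
          have : u i.castSucc = a * j i + (2:ℤ)^(ℓ+m) * c := by
            rw [← haa] at hc
            omega
          change (g:ℤ) ∣ u i.castSucc
          rw [this]
          exact dvd_add (Dvd.dvd.mul_right hga _) (Dvd.dvd.mul_right hgN _)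
        · rw [Finset.mem_Ico]
          constructor
          · exact Int.ediv_nonneg (hjrange i).1 hN1pos.le
          · rw [Int.ediv_lt_iff_lt_mul hN1pos]
            calc j i < 2^(ℓ+m) := (hjrange i).2
              _ = (g:ℤ) * ((2:ℤ)^(ℓ+m) / (g:ℤ)) := hN1.symm
              _ = ((g:ℤ)) * ((2:ℤ)^(ℓ+m) / (g:ℤ)) := by ring
    -- injOn
    · intro j1 hj1 j2 hj2 heq
      rw [Finset.mem_coe, Finset.mem_filter] at hj1 hj2
      obtain ⟨hw01, hwspan1, hwlt1⟩ := wit_spec s ℓ m j1 hj1.2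
      obtain ⟨hw02, hwspan2, hwlt2⟩ := wit_spec s ℓ m j2 hj2.2
      dsimp only at heq
      have ha : wit s ℓ m j1 (Fin.last s) = wit s ℓ m j2 (Fin.last s) :=
        congrArg Sigma.fst heq
      have hfun : (fun i : Fin s => (wit s ℓ m j1 i.castSucc,
          j1 i / ((2:ℤ)^(ℓ+m) / (Int.gcd (wit s ℓ m j1 (Fin.last s)) ((2:ℤ)^(ℓ+m))))))
          = (fun i : Fin s => (wit s ℓ m j2 i.castSucc,
          j2 i / ((2:ℤ)^(ℓ+m) / (Int.gcd (wit s ℓ m j2 (Fin.last s)) ((2:ℤ)^(ℓ+m)))))) := by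
        have h2 := congrArg (fun x : (Σ _a : ℤ, Fin s → ℤ × ℤ) => x.snd) heq
        exact h2
      set a := wit s ℓ m j1 (Fin.last s) with haa
      have hdvds1 := span_dvd hwspan1
      have hdvds2 := span_dvd hwspan2
      have ha0 : a ≠ 0 := by
        -- same argument as before
        intro haz
        apply hw01
        funext i
        refine Fin.lastCases ?_ ?_ i
        · exact haz
        · intro i'
          have h1 : (2:ℤ)^(ℓ+m) ∣ wit s ℓ m j1 i'.castSucc := by
            have := hdvds1 i'
            rw [← haa, haz] at this
            simpa using this
          have := int_eq_zero_of_dvd_of_abs_lt h1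
            (lt_of_lt_of_le (hwlt1 i'.castSucc) hMN)
          simpa using this
      have haM : |a| < 2^(m-3) := hwlt1 (Fin.last s)
      obtain ⟨hgpos, hgM⟩ := gfacts a ha0 haM
      set g : ℕ := Int.gcd a ((2:ℤ)^(ℓ+m)) with hgdef
      have hgN : ((g:ℤ)) ∣ (2:ℤ)^(ℓ+m) := Int.gcd_dvd_right _ _
      have hga : (g:ℤ) ∣ a := Int.gcd_dvd_left _ _
      set N1 : ℤ := (2:ℤ)^(ℓ+m) / (g:ℤ) with hN1def
      have hN1 : (g:ℤ) * N1 = (2:ℤ)^(ℓ+m) := Int.mul_ediv_cancel' hgN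
      have hN1pos : 0 < N1 := by
        rcases lt_trichotomy N1 0 with h | h | h
        · exfalso; nlinarith [hN1, hNpos, hgpos]
        · exfalso; rw [h] at hN1; simp at hN1; omega
        · exact h
      set a1 : ℤ := a / (g:ℤ) with ha1def
      have ha1 : (g:ℤ) * a1 = a := Int.mul_ediv_cancel' hga
      have hcop : Int.gcd a1 N1 = 1 := Int.gcd_div_gcd_div_gcd hgpos
      have hcop' : IsCoprime N1 a1 := by
        rw [Int.isCoprime_iff_gcd_eq_one, Int.gcd_comm]
        exact hcop
      funext i
      have h1 := hdvds1 i
      have h2 := hdvds2 i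
      have hueq : wit s ℓ m j1 i.castSucc = wit s ℓ m j2 i.castSucc := by
        have := congrFun hfun i
        exact (Prod.ext_iff.mp this).1
      have hqeq : j1 i / N1 = j2 i / N1 := by
        have := congrFun hfun i
        have h3 := (Prod.ext_iff.mp this).2
        simpa [← ha, ← hN1def] using h3
      -- N ∣ a * (j1 i - j2 i)
      have hNd : (2:ℤ)^(ℓ+m) ∣ a * (j1 i - j2 i) := by
        rw [← ha] at h2
        rw [← hueq] at h2
        have : a * (j1 i - j2 i) =
          (wit s ℓ m j1 i.castSucc - a * j2 i) - (wit s ℓ m j1 i.castSucc - a * j1 i) := by ring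
        rw [this]
        exact dvd_sub h2 h1
      have hN1d : N1 ∣ j1 i - j2 i := by
        apply hcop'.dvd_of_dvd_mul_left
        have h4 : (g:ℤ) * (N1 * (a1 * (j1 i - j2 i))) = (g:ℤ) * ((2:ℤ)^(ℓ+m) / (g:ℤ)) * (a1 * (j1 i - j2 i)) := by ring
        have h5 : (g:ℤ) ∣ a * (j1 i - j2 i) → True := fun _ => trivial
        obtain ⟨c, hc⟩ := hNd
        refine ⟨c, ?_⟩
        have hg0 : (g:ℤ) ≠ 0 := by positivity
        apply mul_left_cancel₀ hg0
        calc (g:ℤ) * (a1 * (j1 i - j2 i)) = ((g:ℤ) * a1) * (j1 i - j2 i) := by ring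
          _ = a * (j1 i - j2 i) := by rw [ha1]
          _ = (2:ℤ)^(ℓ+m) * c := hc
          _ = ((g:ℤ) * N1) * c := by rw [hN1]
          _ = (g:ℤ) * (N1 * c) := by ring
      have hmodeq : j1 i % N1 = j2 i % N1 := by
        have : j2 i ≡ j1 i [ZMOD N1] := Int.modEq_iff_dvd.mpr hN1d
        exact this.symm
      have e1 := Int.mul_ediv_add_emod (j1 i) N1
      have e2 := Int.mul_ediv_add_emod (j2 i) N1
      rw [← hqeq, ← hmodeq] at e2
      omega
  refine le_trans hstep ?_
  -- card of T
  rw [hT, Finset.card_sigma]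
  have hbound : ∀ a ∈ (Finset.Ioo (-(2:ℤ)^(m-3)) (2^(m-3))).erase 0,
      (Fintype.piFinset (fun _ : Fin s =>
        ((Finset.Ioo (-(2:ℤ)^(m-3)) (2^(m-3))).filter
          (fun u => ((Int.gcd a ((2:ℤ)^(ℓ+m)) : ℤ)) ∣ u)) ×ˢ
        Finset.Ico (0:ℤ) (Int.gcd a ((2:ℤ)^(ℓ+m))))).card ≤ 2^((m-2)*s) := by
    intro a hamem
    rw [Finset.mem_erase, Finset.mem_Ioo] at hamem
    obtain ⟨ha0, ha1, ha2⟩ := hamem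
    obtain ⟨hgpos, hgM⟩ := gfacts a ha0 (abs_lt.mpr ⟨ha1, ha2⟩)
    rw [Fintype.card_piFinset]
    have hcard1 : (((Finset.Ioo (-(2:ℤ)^(m-3)) (2^(m-3))).filter
          (fun u => ((Int.gcd a ((2:ℤ)^(ℓ+m)) : ℤ)) ∣ u)) ×ˢ
        Finset.Ico (0:ℤ) (Int.gcd a ((2:ℤ)^(ℓ+m)))).card ≤ 2^(m-2) := by
      refine le_trans (coord_card (by exact_mod_cast hgpos) hgM hMpos) ?_
      rw [Int.card_Ico, toNat_twoM m hm]
    calc ∏ _i : Fin s, (((Finset.Ioo (-(2:ℤ)^(m-3)) (2^(m-3))).filter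
          (fun u => ((Int.gcd a ((2:ℤ)^(ℓ+m)) : ℤ)) ∣ u)) ×ˢ
        Finset.Ico (0:ℤ) (Int.gcd a ((2:ℤ)^(ℓ+m)))).card
        ≤ ∏ _i : Fin s, 2^(m-2) := Finset.prod_le_prod (by intros; positivity)
          (fun i _ => hcard1)
      _ = (2^(m-2))^s := by rw [Finset.prod_const, Finset.card_univ, Fintype.card_fin]
      _ = 2^((m-2)*s) := by rw [← pow_mul]
  refine le_trans (Finset.sum_le_card_nsmul _ _ _ hbound) ?_
  rw [smul_eq_mul]
  have hX : ((Finset.Ioo (-(2:ℤ)^(m-3)) (2^(m-3))).erase 0).card ≤ 2^(m-2) := by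
    refine le_trans (Finset.card_erase_le) ?_
    rw [Int.card_Ioo, toNat_twoM' m hm]
    exact Nat.sub_le _ _
  calc ((Finset.Ioo (-(2:ℤ)^(m-3)) (2^(m-3))).erase 0).card * 2^((m-2)*s)
      ≤ 2^(m-2) * 2^((m-2)*s) := Nat.mul_le_mul_right _ hX
    _ = 2^((m-2)*(s+1)) := by rw [← pow_add]; congr 1; ring

lemma exp_ineq (s ℓ m : ℕ) (hm : 4 ≤ m) (hls : m ≤ ℓ * s) :
    (m-2)*(s+1)+(s+1) ≤ (ℓ+m-1)*s := by
  obtain ⟨a, rfl⟩ : ∃ a, m = a + 2 := ⟨m-2, by omega⟩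
  rw [show a+2-2 = a by omega, show ℓ+(a+2)-1 = ℓ+a+1 by omega]
  nlinarith [hls]

lemma m_sub_three (m : ℕ) (h : m < 4) : m - 3 = 0 := by omega

open scoped Classical in
theorem prob_short_vector_le (s ℓ m : ℕ) (hs : 1 ≤ s) (hl : 1 ≤ ℓ) (hm : 1 ≤ m)
    (hls : m ≤ ℓ * s) (d : ℤ) (hd : 0 < d) (hd' : d < 2 ^ m) :
    ((((Fintype.piFinset (fun _ : Fin s =>
        (Finset.Ico (0 : ℤ) (2 ^ (ℓ + m))).filter
          (fun j => |smod (d * j) (2 ^ m)| ≤ 2 ^ (m - 2)))).filter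
      (fun j : Fin s → ℤ => ∃ u : Fin (s + 1) → ℤ, u ≠ 0 ∧
        u ∈ Submodule.span ℤ (Set.range
          (Fin.cons (Fin.snoc j 1)
            (fun i : Fin s => Pi.single i.castSucc ((2 : ℤ) ^ (ℓ + m))) :
              Fin (s + 1) → Fin (s + 1) → ℤ)) ∧
        ∀ i, |u i| < 2 ^ (m - 3))).card : ℝ) /
      ((Fintype.piFinset (fun _ : Fin s =>
        (Finset.Ico (0 : ℤ) (2 ^ (ℓ + m))).filter
          (fun j => |smod (d * j) (2 ^ m)| ≤ 2 ^ (m - 2)))).card : ℝ)) ≤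
    ((2 : ℝ) ^ (s + 1))⁻¹ := by
  set Gd := (Finset.Ico (0 : ℤ) (2 ^ (ℓ + m))).filter
      (fun j => |smod (d * j) (2 ^ m)| ≤ 2 ^ (m - 2)) with hGd
  have hGsub : Gd ⊆ Finset.Ico (0:ℤ) (2^(ℓ+m)) := by
    rw [hGd]; exact Finset.filter_subset _ _
  have hGcard : 2^(ℓ+m-1) ≤ Gd.card := by
    rw [hGd]; exact good_card ℓ m hl hm d hd hd'
  clear_value Gd
  have hden : (Fintype.piFinset (fun _ : Fin s => Gd)).card = Gd.card ^ s := by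
    rw [Fintype.card_piFinset, Finset.prod_const, Finset.card_univ, Fintype.card_fin]
  have hGpos : 0 < Gd.card := lt_of_lt_of_le (Nat.pow_pos (by norm_num)) hGcard
  have hdenpos : (0:ℝ) < ((Fintype.piFinset (fun _ : Fin s => Gd)).card : ℝ) := by
    rw [hden]
    positivity
  rcases le_or_gt 4 m with hm4 | hm4
  · -- main case
    have hnum := bad_card s ℓ m hm4 hl Gd hGsub
    have hexp : (m-2)*(s+1)+(s+1) ≤ (ℓ+m-1)*s := exp_ineq s ℓ m hm4 hls
    have key : ((Fintype.piFinset (fun _ : Fin s => Gd)).filter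
      (fun j : Fin s → ℤ => ∃ u : Fin (s + 1) → ℤ, u ≠ 0 ∧
        u ∈ Submodule.span ℤ (Set.range
          (Fin.cons (Fin.snoc j 1)
            (fun i : Fin s => Pi.single i.castSucc ((2 : ℤ) ^ (ℓ + m))) :
              Fin (s + 1) → Fin (s + 1) → ℤ)) ∧
        ∀ i, |u i| < 2 ^ (m - 3))).card * 2^(s+1)
        ≤ (Fintype.piFinset (fun _ : Fin s => Gd)).card := by
      calc ((Fintype.piFinset (fun _ : Fin s => Gd)).filter _).card * 2^(s+1)
          ≤ 2^((m-2)*(s+1)) * 2^(s+1) := Nat.mul_le_mul_right _ hnum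
        _ = 2^((m-2)*(s+1)+(s+1)) := (pow_add 2 _ _).symm
        _ ≤ 2^((ℓ+m-1)*s) := Nat.pow_le_pow_right (by norm_num) hexp
        _ = (2^(ℓ+m-1))^s := pow_mul 2 _ _
        _ ≤ Gd.card ^ s := Nat.pow_le_pow_left hGcard s
        _ = (Fintype.piFinset (fun _ : Fin s => Gd)).card := hden.symm
    rw [div_le_iff₀ hdenpos, inv_mul_eq_div, le_div_iff₀ (by positivity)]
    exact_mod_cast key
  · -- degenerate case : no nonzero short vector at all
    have hzero : ((Fintype.piFinset (fun _ : Fin s => Gd)).filter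
      (fun j : Fin s → ℤ => ∃ u : Fin (s + 1) → ℤ, u ≠ 0 ∧
        u ∈ Submodule.span ℤ (Set.range
          (Fin.cons (Fin.snoc j 1)
            (fun i : Fin s => Pi.single i.castSucc ((2 : ℤ) ^ (ℓ + m))) :
              Fin (s + 1) → Fin (s + 1) → ℤ)) ∧
        ∀ i, |u i| < 2 ^ (m - 3))).card = 0 := by
      rw [Finset.card_eq_zero, Finset.filter_eq_empty_iff]
      intro j _
      rintro ⟨u, hu0, _, hult⟩
      apply hu0
      funext i
      have h1 := hult i
      rw [m_sub_three m hm4, pow_zero] at h1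
      simp only [Pi.zero_apply]
      exact Int.abs_lt_one_iff.mp h1
    rw [hzero]
    rw [Nat.cast_zero, zero_div]
    positivity
end

section
/- Let u = (u_1, ..., u_{s+1}) be a nonzero integer vector and suppose 2^κ is the largest power of 2 dividing u_{s+1}. If u belongs to a lattice L generated by (j_1,...,j_s,1) and 2^{ℓ+m} e_i (with 0 ≤ j_i < 2^{ℓ+m}, and ℓ+m > κ), then 2^κ divides u_i for every i, and the number of tuples (j_1,...,j_s) for which u ∈ L is exactly 2^{sκ}. -/
lemma mem_span_iff {s : ℕ} (N : ℤ) (j : Fin s → ℤ) (u : Fin (s+1) → ℤ) :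
    u ∈ Submodule.span ℤ (Set.range (Fin.cons (Fin.snoc j 1)
      (fun i : Fin s => Pi.single i.castSucc N) : Fin (s+1) → Fin (s+1) → ℤ)) ↔
    ∀ i : Fin s, N ∣ u i.castSucc - u (Fin.last s) * j i := by
  rw [Submodule.mem_span_range_iff_exists_fun]
  have key : ∀ (c : Fin (s+1) → ℤ) (k : Fin (s+1)),
      (∑ i, c i • (Fin.cons (Fin.snoc j 1)
        (fun i : Fin s => Pi.single i.castSucc N) : Fin (s+1) → Fin (s+1) → ℤ) i) k
      = Fin.lastCases (c 0) (fun k' => c 0 * j k' + c k'.succ * N) k := by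
    intro c k
    rw [Finset.sum_apply]
    simp only [Pi.smul_apply, smul_eq_mul]
    rw [Fin.sum_univ_succ]
    simp only [Fin.cons_zero, Fin.cons_succ]
    refine Fin.lastCases ?_ ?_ k
    · rw [Fin.lastCases_last, Fin.snoc_last]
      rw [Finset.sum_eq_zero (fun i _ => by
        rw [Pi.single_eq_of_ne (Fin.castSucc_lt_last i).ne', mul_zero])]
      ring
    · intro k'
      simp only [Fin.snoc_castSucc, Fin.lastCases_castSucc]
      congr 1
      rw [Finset.sum_eq_single k']
      · simp
      · intro b _ hb
        rw [Pi.single_eq_of_ne (fun hk => hb ((Fin.castSucc_injective s) hk).symm)]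
        ring
      · simp
  constructor
  · rintro ⟨c, hc⟩ i
    have hl := congrFun hc (Fin.last s)
    have hi := congrFun hc i.castSucc
    rw [key] at hl hi
    simp only [Fin.lastCases_last, Fin.lastCases_castSucc] at hl hi
    exact ⟨c i.succ, by rw [← hi, hl]; ring⟩
  · intro h
    refine ⟨Fin.cons (u (Fin.last s)) (fun i => (u i.castSucc - u (Fin.last s) * j i) / N), ?_⟩
    funext k
    rw [key]
    refine Fin.lastCases ?_ ?_ k
    · simp
    · intro k'
      simp only [Fin.lastCases_castSucc, Fin.cons_zero, Fin.cons_succ]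
      have := Int.ediv_mul_cancel (h k')
      linarith [this]


lemma count_emod (d K r : ℤ) (hd : 0 < d) (hr : 0 ≤ r) (hrd : r < d) :
    ((Finset.Ico (0:ℤ) (d*K)).filter (fun x => x % d = r)).card = K.toNat := by
  have hinj : Function.Injective (fun t : ℤ => r + d * t) := fun a b h => by
    simp only at h
    exact mul_left_cancel₀ hd.ne' (add_left_cancel h)
  have himg : (Finset.Ico (0:ℤ) (d*K)).filter (fun x => x % d = r)
      = (Finset.Ico (0:ℤ) K).image (fun t => r + d * t) := by
    ext x
    simp only [Finset.mem_filter, Finset.mem_Ico, Finset.mem_image]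
    constructor
    · rintro ⟨⟨hx0, hxK⟩, hmod⟩
      have heq : d * (x / d) + r = x := by
        conv_rhs => rw [← Int.mul_ediv_add_emod x d]
        rw [hmod]
      refine ⟨x / d, ⟨Int.ediv_nonneg hx0 hd.le, ?_⟩, by linarith⟩
      have h2 : d * (x / d) < d * K := by linarith
      exact lt_of_mul_lt_mul_left h2 hd.le
    · rintro ⟨t, ⟨ht0, htK⟩, rfl⟩
      have h1 : d * t + d ≤ d * K := by
        have := mul_le_mul_of_nonneg_left (by linarith : t + 1 ≤ K) hd.le
        linarith [this]
      refine ⟨⟨by positivity, by linarith⟩, ?_⟩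
      rw [Int.add_mul_emod_self_left, Int.emod_eq_of_lt hr hrd]
  rw [himg, Finset.card_image_of_injective _ hinj, Int.card_Ico, sub_zero]

lemma coord_count (N κ : ℕ) (hκ : κ < N) (w a : ℤ) (hw : ¬ (2:ℤ) ∣ w) :
    ((Finset.Ico (0:ℤ) (2^N)).filter
      (fun x => (2:ℤ)^N ∣ 2^κ*a - (2^κ*w) * x)).card = 2^κ := by
  set e := N - κ with he
  have heN : N = κ + e := by omega
  have hd : (0:ℤ) < 2^e := by positivity
  obtain ⟨k, hk⟩ : ∃ k, w = 2*k + 1 := by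
    rcases Int.even_or_odd w with h | h
    · exact absurd h.two_dvd hw
    · obtain ⟨k, hk⟩ := h; exact ⟨k, hk⟩
  have hcop : IsCoprime ((2:ℤ)^e) w :=
    (IsCoprime.pow_right (⟨1, -k, by rw [hk]; ring⟩ : IsCoprime w ((2:ℤ)))).symm
  obtain ⟨p, q, hpq⟩ := hcop.symm
  set r : ℤ := (p * a) % (2^e) with hr
  have hr0 : 0 ≤ r := Int.emod_nonneg _ hd.ne'
  have hrd : r < 2^e := Int.emod_lt_of_pos _ hd
  have hbase : (2:ℤ)^e ∣ a - w * (p * a) := by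
    refine ⟨a * q, ?_⟩
    have h1 : 1 - p * w = q * 2^e := by linarith
    calc a - w * (p*a) = a * (1 - p * w) := by ring
      _ = a * (q * 2^e) := by rw [h1]
      _ = 2^e * (a * q) := by ring
  have key : ∀ x : ℤ, x % 2^e = r ↔ (2:ℤ)^e ∣ x - p*a := by
    intro x
    rw [hr, Int.emod_eq_emod_iff_emod_sub_eq_zero, ← Int.dvd_iff_emod_eq_zero]
  have hiff : ∀ x : ℤ, ((2:ℤ)^N ∣ 2^κ*a - (2^κ*w) * x) ↔ x % (2^e) = r := by
    intro x
    have h2κ : (0:ℤ) < 2^κ := by positivity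
    constructor
    · intro hdvd
      rw [heN, pow_add] at hdvd
      have hdvd' : (2:ℤ)^e ∣ a - w * x := by
        have h3 : (2:ℤ)^κ * 2^e ∣ 2^κ * (a - w * x) := by
          convert hdvd using 1; ring
        exact (mul_dvd_mul_iff_left h2κ.ne').mp h3
      have hdiff : (2:ℤ)^e ∣ w * (x - p * a) := by
        have h4 : w * (x - p * a) = (a - w * (p*a)) - (a - w * x) := by ring
        rw [h4]; exact dvd_sub hbase hdvd'
      exact (key x).mpr (hcop.dvd_of_dvd_mul_left hdiff)
    · intro hmod
      have hxpa : (2:ℤ)^e ∣ x - p * a := (key x).mp hmod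
      have hdvd' : (2:ℤ)^e ∣ a - w * x := by
        have h5 : a - w * x = (a - w * (p*a)) - w * (x - p * a) := by ring
        rw [h5]
        exact dvd_sub hbase (Dvd.dvd.mul_left hxpa w)
      rw [heN, pow_add]
      obtain ⟨c, hc⟩ := hdvd'
      exact ⟨c, by rw [show (2:ℤ)^κ*a - 2^κ*w*x = 2^κ * (a - w*x) by ring, hc]; ring⟩
  have hfe : ((Finset.Ico (0:ℤ) (2^N)).filter
      (fun x => (2:ℤ)^N ∣ 2^κ*a - (2^κ*w) * x))
      = ((Finset.Ico (0:ℤ) (2^N)).filter (fun x => x % (2^e) = r)) :=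
    Finset.filter_congr (fun x _ => by rw [hiff x])
  have hNpow : (2:ℤ)^N = 2^e * 2^κ := by rw [heN, pow_add]; ring
  rw [hfe, hNpow, count_emod _ _ _ hd hr0 hrd]
  rw [show ((2:ℤ)^κ) = ((2^κ : ℕ) : ℤ) by push_cast; ring, Int.toNat_natCast]



open scoped Classical in
theorem short_vector_divisibility_and_count (s ℓ m : ℕ) (hs : 1 ≤ s) (hl : 1 ≤ ℓ)
    (hm : 1 ≤ m) (κ : ℕ) (hκ : κ < ℓ + m)
    (u : Fin (s + 1) → ℤ) (hu : u ≠ 0)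
    (h1 : (2 : ℤ) ^ κ ∣ u (Fin.last s)) (h2 : ¬ (2 : ℤ) ^ (κ + 1) ∣ u (Fin.last s))
    (hex : ∃ j : Fin s → ℤ, (∀ i, 0 ≤ j i ∧ j i < 2 ^ (ℓ + m)) ∧
      u ∈ Submodule.span ℤ (Set.range
        (Fin.cons (Fin.snoc j 1)
          (fun i : Fin s => Pi.single i.castSucc ((2 : ℤ) ^ (ℓ + m))) :
            Fin (s + 1) → Fin (s + 1) → ℤ))) :
    (∀ i, (2 : ℤ) ^ κ ∣ u i) ∧
    ((Fintype.piFinset (fun _ : Fin s => Finset.Ico (0 : ℤ) (2 ^ (ℓ + m)))).filter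
      (fun j : Fin s → ℤ =>
        u ∈ Submodule.span ℤ (Set.range
          (Fin.cons (Fin.snoc j 1)
            (fun i : Fin s => Pi.single i.castSucc ((2 : ℤ) ^ (ℓ + m))) :
              Fin (s + 1) → Fin (s + 1) → ℤ)))).card = 2 ^ (s * κ) := by
  obtain ⟨j₀, hj₀, hmem⟩ := hex
  rw [mem_span_iff] at hmem
  have hdiv : ∀ i, (2:ℤ)^κ ∣ u i := by
    refine Fin.lastCases h1 (fun i => ?_)
    have h3 : (2:ℤ)^κ ∣ u i.castSucc - u (Fin.last s) * j₀ i :=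
      dvd_trans (pow_dvd_pow 2 hκ.le) (hmem i)
    have h4 : (2:ℤ)^κ ∣ u (Fin.last s) * j₀ i := h1.mul_right _
    have := dvd_add h3 h4
    simpa using this
  refine ⟨hdiv, ?_⟩
  obtain ⟨w, hw⟩ := h1
  have hwodd : ¬ (2:ℤ) ∣ w := by
    rintro ⟨t, ht⟩
    exact h2 ⟨t, by rw [hw, ht, pow_succ]; ring⟩
  have hfilt : ((Fintype.piFinset (fun _ : Fin s => Finset.Ico (0 : ℤ) (2 ^ (ℓ + m)))).filter
      (fun j : Fin s → ℤ =>
        u ∈ Submodule.span ℤ (Set.range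
          (Fin.cons (Fin.snoc j 1)
            (fun i : Fin s => Pi.single i.castSucc ((2 : ℤ) ^ (ℓ + m))) :
              Fin (s + 1) → Fin (s + 1) → ℤ))))
      = Fintype.piFinset (fun i : Fin s => (Finset.Ico (0:ℤ) (2^(ℓ+m))).filter
          (fun x => (2:ℤ)^(ℓ+m) ∣ u i.castSucc - u (Fin.last s) * x)) := by
    ext j
    simp only [Finset.mem_filter, Fintype.mem_piFinset, Finset.mem_filter,
      mem_span_iff, forall_and]
  rw [hfilt, Fintype.card_piFinset]
  have hcard : ∀ i : Fin s, ((Finset.Ico (0:ℤ) (2^(ℓ+m))).filter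
      (fun x => (2:ℤ)^(ℓ+m) ∣ u i.castSucc - u (Fin.last s) * x)).card = 2^κ := by
    intro i
    obtain ⟨a, ha⟩ := hdiv i.castSucc
    have := coord_count (ℓ+m) κ hκ w a hwodd
    rw [← this]
    congr 1
    refine Finset.filter_congr (fun x _ => ?_)
    rw [ha, hw]
  rw [Finset.prod_congr rfl (fun i _ => hcard i), Finset.prod_const,
    Finset.card_univ, Fintype.card_fin, ← pow_mul, mul_comm κ s]
end
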